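/- Let E be a finite-dimensional complex vector space and A,B linear operators on E. The operator quintuple L_{A,B} = (E⊕E; {(x,0)}, {(0,x)}, {(x,x)}, {(x,Ax)}, {(x,Bx)}) is brick if and only if the pair (A,B) is brick, i.e., every operator T on E with TA = AT and TB = BT is a scalar multiple of the identity. -/

import Mathlib

/-- The operator quintuple L_{A,B} of subspaces of E ⊕ E. -/
def operatorQuintuple {E : Type*} [AddCommGroup E] [Module ℂ E]
    (A B : E →ₗ[ℂ] E) : Fin 5 → Submodule ℂ (E × E) :=
  ![(⊤ : Submodule ℂ E).prod (⊥ : Submodule ℂ E),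
    (⊥ : Submodule ℂ E).prod (⊤ : Submodule ℂ E),
    LinearMap.graph (LinearMap.id : E →ₗ[ℂ] E),
    LinearMap.graph A,
    LinearMap.graph B]

/-- L_{A,B} is brick iff the pair (A,B) is brick. -/
theorem operatorQuintuple_brick_iff
    (E : Type*) [AddCommGroup E] [Module ℂ E] [FiniteDimensional ℂ E]
    (A B : E →ₗ[ℂ] E) :
    (∀ X : (E × E) →ₗ[ℂ] (E × E),
        (∀ i, ∀ v ∈ operatorQuintuple A B i, X v ∈ operatorQuintuple A B i) →
        ∃ c : ℂ, X = c • LinearMap.id) ↔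
    (∀ T : E →ₗ[ℂ] E, T ∘ₗ A = A ∘ₗ T → T ∘ₗ B = B ∘ₗ T →
        ∃ c : ℂ, T = c • LinearMap.id) := by
  constructor
  · intro h T hA hB
    have hpres : ∀ i, ∀ v ∈ operatorQuintuple A B i,
        T.prodMap T v ∈ operatorQuintuple A B i := by
      intro i v hv
      fin_cases i
      · simp only [operatorQuintuple] at hv ⊢
        simp only [show ((⟨0, by norm_num⟩ : Fin 5)) = (0 : Fin 5) from rfl,
          Matrix.cons_val_zero, Submodule.mem_prod, Submodule.mem_top,
          Submodule.mem_bot, true_and] at hv ⊢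
        simp [hv]
      · simp only [operatorQuintuple] at hv ⊢
        simp only [show ((⟨1, by norm_num⟩ : Fin 5)) = (1 : Fin 5) from rfl,
          Matrix.cons_val_one, Matrix.head_cons, Matrix.cons_val_zero, Submodule.mem_prod,
          Submodule.mem_top, Submodule.mem_bot, and_true] at hv ⊢
        simp [hv]
      · simp only [operatorQuintuple] at hv ⊢
        simp only [show ((⟨2, by norm_num⟩ : Fin 5)) = (2 : Fin 5) from rfl,
          Matrix.cons_val_two, Matrix.tail_cons, Matrix.head_cons,
          LinearMap.mem_graph_iff, LinearMap.id_coe, id_eq, LinearMap.prodMap_apply] at hv ⊢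
        exact congrArg T hv
      · simp only [operatorQuintuple] at hv ⊢
        simp only [show ((⟨3, by norm_num⟩ : Fin 5)) = (3 : Fin 5) from rfl,
          Matrix.cons_val_three, Matrix.tail_cons, Matrix.head_cons,
          LinearMap.mem_graph_iff, LinearMap.prodMap_apply] at hv ⊢
        rw [hv, ← LinearMap.comp_apply, hA, LinearMap.comp_apply]
      · simp only [operatorQuintuple] at hv ⊢
        simp only [show ((⟨4, by norm_num⟩ : Fin 5)) = (4 : Fin 5) from rfl,
          Matrix.cons_val_four, Matrix.tail_cons, Matrix.head_cons,
          LinearMap.mem_graph_iff, LinearMap.prodMap_apply] at hv ⊢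
        rw [hv, ← LinearMap.comp_apply, hB, LinearMap.comp_apply]
    obtain ⟨c, hc⟩ := h (T.prodMap T) hpres
    refine ⟨c, ?_⟩
    ext x
    have := congrArg (fun f => (f (x, 0)).1) hc
    simpa using this
  · intro h X hX
    set T : E →ₗ[ℂ] E := (LinearMap.fst ℂ E E) ∘ₗ X ∘ₗ (LinearMap.inl ℂ E E) with hT
    set Q : E →ₗ[ℂ] E := (LinearMap.snd ℂ E E) ∘ₗ X ∘ₗ (LinearMap.inr ℂ E E) with hQ
    have h0 : ∀ x : E, X (x, 0) = (T x, 0) := by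
      intro x
      have := hX 0 (x, 0) (by simp [operatorQuintuple])
      simp only [operatorQuintuple, Matrix.cons_val_zero, Submodule.mem_prod,
        Submodule.mem_bot, Submodule.mem_top, true_and] at this
      have h1 : (X (x, 0)).1 = T x := by simp [hT]
      exact Prod.ext h1 this
    have h1 : ∀ y : E, X (0, y) = (0, Q y) := by
      intro y
      have := hX 1 (0, y) (by simp [operatorQuintuple])
      simp only [operatorQuintuple, Matrix.cons_val_one, Matrix.head_cons, Matrix.cons_val_zero, Submodule.mem_prod,
        Submodule.mem_bot, Submodule.mem_top, and_true] at this
      have h2 : (X (0, y)).2 = Q y := by simp [hQ]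
      exact Prod.ext this h2
    have hXv : ∀ x y : E, X (x, y) = (T x, Q y) := by
      intro x y
      have : (x, y) = (x, (0 : E)) + ((0 : E), y) := by simp
      rw [this, map_add, h0, h1]
      simp
    have hQT : ∀ x : E, Q x = T x := by
      intro x
      have := hX 2 (x, x) (by simp [operatorQuintuple])
      simp only [operatorQuintuple, Matrix.cons_val_two, Matrix.tail_cons, Matrix.head_cons,
        LinearMap.mem_graph_iff, hXv, LinearMap.id_coe, id_eq] at this
      exact this
    have hTA : T ∘ₗ A = A ∘ₗ T := by
      ext x
      have := hX 3 (x, A x) (by simp [operatorQuintuple])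
      simp only [operatorQuintuple, Matrix.cons_val_three, Matrix.tail_cons, Matrix.head_cons,
        LinearMap.mem_graph_iff, hXv] at this
      simp only [LinearMap.comp_apply]
      rw [← hQT (A x), this]
    have hTB : T ∘ₗ B = B ∘ₗ T := by
      ext x
      have := hX 4 (x, B x) (by simp [operatorQuintuple])
      simp only [operatorQuintuple, Matrix.cons_val_four, Matrix.tail_cons, Matrix.head_cons,
        LinearMap.mem_graph_iff, hXv] at this
      simp only [LinearMap.comp_apply]
      rw [← hQT (B x), this]
    obtain ⟨c, hc⟩ := h T hTA hTB
    refine ⟨c, LinearMap.ext fun v => ?_⟩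
    obtain ⟨x, y⟩ := v
    rw [hXv, hQT]
    simp [hc, Prod.smul_mk]
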